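/- Let V be a finite-dimensional complex inner product space and T : V → V a self-adjoint (with respect to the inner product) linear endomorphism with eigenvalue λ. Write the characteristic polynomial of T as P(X) = (X−λ)^μ · Q(X) with Q(λ) ≠ 0. Then the operator Q(T)/Q(λ) is the orthogonal projection of V onto the eigenspace ker(T−λ). -/

import Mathlib

open Polynomial

private lemma aeval_apply_of_eig {V : Type*} [NormedAddCommGroup V] [InnerProductSpace ℂ V]
    {T : V →ₗ[ℂ] V} {lam : ℂ} {x : V} (hx : T x = lam • x) (p : ℂ[X]) :
    Polynomial.aeval T p x = p.eval lam • x := by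
  have hpow : ∀ n : ℕ, (T ^ n) x = lam ^ n • x := by
    intro n
    induction n with
    | zero => simp
    | succ n ih =>
        rw [pow_succ', Module.End.mul_apply, ih, map_smul, hx, smul_smul, ← pow_succ]
  induction p using Polynomial.induction_on' with
  | add p q hp hq => simp [hp, hq, add_smul]
  | monomial n a =>
      simp [Polynomial.aeval_monomial, Algebra.smul_def, hpow n, smul_smul, mul_comm]

private lemma aeval_mem_of_invariant {V : Type*} [NormedAddCommGroup V] [InnerProductSpace ℂ V]
    {T : V →ₗ[ℂ] V} {p : Submodule ℂ V} (hp : ∀ x ∈ p, T x ∈ p) (q : ℂ[X])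
    {x : V} (hx : x ∈ p) : Polynomial.aeval T q x ∈ p := by
  have hpow : ∀ n : ℕ, (T ^ n) x ∈ p := by
    intro n
    induction n with
    | zero => simpa
    | succ n ih => rw [pow_succ', Module.End.mul_apply]; exact hp _ ih
  induction q using Polynomial.induction_on' with
  | add q r hq hr => rw [map_add, LinearMap.add_apply]; exact p.add_mem hq hr
  | monomial n a =>
      rw [Polynomial.aeval_monomial, Module.End.mul_apply, Module.algebraMap_end_apply]
      exact p.smul_mem a (hpow n)

/-- Let `V` be a finite-dimensional complex inner product space and
`T : V → V` a self-adjoint linear endomorphism with eigenvalue `λ`.  Write the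
characteristic polynomial of `T` as `P(X) = (X - λ)^μ * Q(X)` with `Q(λ) ≠ 0`.
Then `Q(T)/Q(λ)` is the orthogonal projection of `V` onto the eigenspace `ker (T - λ)`. -/
theorem quotient_aeval_eq_orthogonalProjection
    {V : Type*} [NormedAddCommGroup V] [InnerProductSpace ℂ V] [FiniteDimensional ℂ V]
    (T : V →ₗ[ℂ] V) (hT : T.IsSymmetric) (lam : ℂ)
    (hlam : Module.End.HasEigenvalue T lam)
    (μ : ℕ) (Q : Polynomial ℂ) (hQ : Q.eval lam ≠ 0)
    (hP : LinearMap.charpoly T = (Polynomial.X - Polynomial.C lam) ^ μ * Q) :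
    ∀ v : V, (Q.eval lam)⁻¹ • (Polynomial.aeval T Q) v
      = (Submodule.orthogonalProjection (Module.End.eigenspace T lam) v : V) := by
  intro v
  set E := Module.End.eigenspace T lam with hE
  set a : V := (Submodule.orthogonalProjection E v : V) with haa
  have ha : a ∈ E := (Submodule.orthogonalProjection E v).2
  have hb : v - a ∈ Eᗮ := Submodule.sub_starProjection_mem_orthogonal (K := E) v
  have hTa : T a = lam • a := Module.End.mem_eigenspace_iff.mp ha
  have h1 : Polynomial.aeval T Q a = Q.eval lam • a := aeval_apply_of_eig hTa Q
  -- μ > 0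
  have hroot : (LinearMap.charpoly T).IsRoot lam := by
    have h1 : (minpoly ℂ T).IsRoot lam := Module.End.hasEigenvalue_iff_isRoot.mp hlam
    obtain ⟨c, hc⟩ := LinearMap.minpoly_dvd_charpoly T
    rw [hc]
    simpa using Or.inl h1
  have hμ : 0 < μ := by
    rcases Nat.eq_zero_or_pos μ with h0 | h
    · exfalso
      rw [hP, h0, pow_zero, one_mul] at hroot
      exact hQ hroot
    · exact h
  -- Q(T) (v - a) = 0
  have hchar : Polynomial.aeval T (LinearMap.charpoly T) = 0 := LinearMap.aeval_self_charpoly T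
  have hker : ((T - lam • 1) ^ μ) (Polynomial.aeval T Q (v - a)) = 0 := by
    have h2 : ((T - lam • 1) ^ μ) * Polynomial.aeval T Q = 0 := by
      have h := hchar
      rw [hP, map_mul, map_pow, map_sub, Polynomial.aeval_X, Polynomial.aeval_C,
        Algebra.algebraMap_eq_smul_one] at h
      exact h
    calc ((T - lam • 1) ^ μ) (Polynomial.aeval T Q (v - a))
        = (((T - lam • 1) ^ μ) * Polynomial.aeval T Q) (v - a) := rfl
      _ = 0 := by rw [h2]; rfl
  have hmemE : Polynomial.aeval T Q (v - a) ∈ E := by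
    have hgen : Polynomial.aeval T Q (v - a) ∈ Module.End.genEigenspace T lam μ := by
      rw [Module.End.mem_genEigenspace_nat]
      exact hker
    rwa [hT.isFinitelySemisimple.genEigenspace_eq_eigenspace lam (by exact_mod_cast hμ)] at hgen
  have hmemO : Polynomial.aeval T Q (v - a) ∈ Eᗮ :=
    aeval_mem_of_invariant (fun x hx => hT.invariant_orthogonalComplement_eigenspace lam x hx)
      Q hb
  have h2 : Polynomial.aeval T Q (v - a) = 0 := by
    have := hmemO _ hmemE
    rwa [inner_self_eq_zero] at this
  have h3 : Polynomial.aeval T Q v = Q.eval lam • a := by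
    conv_lhs => rw [show v = a + (v - a) by abel]
    rw [map_add, h1, h2, add_zero]
  rw [h3, smul_smul, inv_mul_cancel₀ hQ, one_smul]
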